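/- (Proposition 1, invariance, case m < N.) For every (G,f) ∈ 𝓛, every z ∈ ℂ^N, and every Hermitian positive definite S ∈ ℂ^{N×N}, the statistic t₁ is invariant under the group action: t₁(Gz + f, G S G†) = t₁(z, S). -/

import Mathlib

open Matrix ComplexOrder

noncomputable def auxF {r q : ℕ} (w : Fin r ⊕ Fin q → ℂ)
    (T : Matrix (Fin r ⊕ Fin q) (Fin r ⊕ Fin q) ℂ) : ℂ × ℂ :=
  (star (w ∘ Sum.inl - (T.toBlocks₁₂ * T.toBlocks₂₂⁻¹) *ᵥ (w ∘ Sum.inr)) ⬝ᵥ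
      ((T.toBlocks₁₁ - T.toBlocks₁₂ * T.toBlocks₂₂⁻¹ * T.toBlocks₂₁)⁻¹ *ᵥ
        (w ∘ Sum.inl - (T.toBlocks₁₂ * T.toBlocks₂₂⁻¹) *ᵥ (w ∘ Sum.inr))),
    star (w ∘ Sum.inr) ⬝ᵥ (T.toBlocks₂₂⁻¹ *ᵥ (w ∘ Sum.inr)))

lemma posDef_toBlocks₂₂ {m n : Type*} [Fintype m] [Fintype n] [DecidableEq m] [DecidableEq n]
    {M : Matrix (m ⊕ n) (m ⊕ n) ℂ} (hM : M.PosDef) : M.toBlocks₂₂.PosDef := by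
  rw [posDef_iff_dotProduct_mulVec]
  constructor
  · ext i j
    simpa [Matrix.toBlocks₂₂, Matrix.conjTranspose_apply] using hM.1.apply (Sum.inr i) (Sum.inr j)
  · intro x hx
    have hy : (Sum.elim (0 : m → ℂ) x) ≠ 0 := by
      intro h; exact hx (funext fun i => congrFun h (Sum.inr i))
    have h2 := hM.dotProduct_mulVec_pos hy
    have hMv : M *ᵥ Sum.elim (0 : m → ℂ) x =
        Sum.elim (M.toBlocks₁₂ *ᵥ x) (M.toBlocks₂₂ *ᵥ x) := by
      conv_lhs => rw [← fromBlocks_toBlocks M]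
      rw [fromBlocks_mulVec]
      simp
    rw [hMv] at h2
    have hst : star (Sum.elim (0 : m → ℂ) x) = Sum.elim (0 : m → ℂ) (star x) := by
      funext i; cases i <;> simp
    rw [hst, dotProduct_block] at h2
    simpa using h2

lemma key2 {r q : ℕ} (D T : Matrix (Fin r ⊕ Fin q) (Fin r ⊕ Fin q) ℂ)
    (w : Fin r ⊕ Fin q → ℂ) (hD21 : D.toBlocks₂₁ = 0)
    (hPu : IsUnit D.toBlocks₁₁) (hRu : IsUnit D.toBlocks₂₂)
    (hE : T.toBlocks₂₂.PosDef) :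
    auxF (D *ᵥ w) (D * T * Dᴴ) = auxF w T := by
  set P := D.toBlocks₁₁ with hP
  set Q := D.toBlocks₁₂ with hQ
  set R := D.toBlocks₂₂ with hR
  set A := T.toBlocks₁₁ with hA
  set B := T.toBlocks₁₂ with hB
  set C := T.toBlocks₂₁ with hC
  set E := T.toBlocks₂₂ with hEe
  haveI : Invertible P := hPu.invertible
  haveI : Invertible R := hRu.invertible
  haveI : Invertible E := hE.isUnit.invertible
  have hDf : D = fromBlocks P Q 0 R := by rw [← hD21]; exact (fromBlocks_toBlocks D).symm
  have hTf : T = fromBlocks A B C E := (fromBlocks_toBlocks T).symm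
  have hprod : D * T * Dᴴ =
      fromBlocks ((P * A + Q * C) * Pᴴ + (P * B + Q * E) * Qᴴ) ((P * B + Q * E) * Rᴴ)
        (R * C * Pᴴ + R * E * Qᴴ) (R * E * Rᴴ) := by
    conv_lhs => rw [hDf, hTf]
    rw [fromBlocks_conjTranspose, fromBlocks_multiply, fromBlocks_multiply]
    simp [Matrix.zero_mul, Matrix.mul_zero]
  have hb11 : (D * T * Dᴴ).toBlocks₁₁ = (P * A + Q * C) * Pᴴ + (P * B + Q * E) * Qᴴ := by
    rw [hprod, toBlocks_fromBlocks₁₁]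
  have hb12 : (D * T * Dᴴ).toBlocks₁₂ = (P * B + Q * E) * Rᴴ := by
    rw [hprod, toBlocks_fromBlocks₁₂]
  have hb21 : (D * T * Dᴴ).toBlocks₂₁ = R * C * Pᴴ + R * E * Qᴴ := by
    rw [hprod, toBlocks_fromBlocks₂₁]
  have hb22 : (D * T * Dᴴ).toBlocks₂₂ = R * E * Rᴴ := by
    rw [hprod, toBlocks_fromBlocks₂₂]
  have hw1 : (D *ᵥ w) ∘ Sum.inl = P *ᵥ (w ∘ Sum.inl) + Q *ᵥ (w ∘ Sum.inr) := by
    conv_lhs => rw [hDf, ← Sum.elim_comp_inl_inr w, fromBlocks_mulVec]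
    simp
  have hw2 : (D *ᵥ w) ∘ Sum.inr = R *ᵥ (w ∘ Sum.inr) := by
    conv_lhs => rw [hDf, ← Sum.elim_comp_inl_inr w, fromBlocks_mulVec]
    simp
  have hinv22 : (R * E * Rᴴ)⁻¹ = Rᴴ⁻¹ * (E⁻¹ * R⁻¹) := by
    rw [Matrix.mul_inv_rev, Matrix.mul_inv_rev]
  have hk1 : (P * B + Q * E) * Rᴴ * (R * E * Rᴴ)⁻¹ = (P * (B * E⁻¹) + Q) * R⁻¹ := by
    rw [hinv22]
    simp only [← Matrix.invOf_eq_nonsing_inv, Matrix.mul_assoc, Matrix.add_mul, Matrix.mul_add, Matrix.sub_mul, Matrix.mul_sub, add_mul, mul_add, sub_mul, mul_sub, Matrix.invOf_mul_cancel_left, Matrix.mul_invOf_cancel_left, Matrix.invOf_mul_cancel_right, Matrix.mul_invOf_cancel_right, invOf_mul_cancel_left, mul_invOf_cancel_left, invOf_mul_cancel_right, mul_invOf_cancel_right]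
  have hk2 : (D * T * Dᴴ).toBlocks₁₁ -
      (D * T * Dᴴ).toBlocks₁₂ * ((D * T * Dᴴ).toBlocks₂₂)⁻¹ * (D * T * Dᴴ).toBlocks₂₁ =
      P * (A - B * E⁻¹ * C) * Pᴴ := by
    rw [hb11, hb12, hb21, hb22, hk1]
    simp only [← Matrix.invOf_eq_nonsing_inv, Matrix.mul_assoc, Matrix.add_mul, Matrix.mul_add, Matrix.sub_mul, Matrix.mul_sub, add_mul, mul_add, sub_mul, mul_sub, Matrix.invOf_mul_cancel_left, Matrix.mul_invOf_cancel_left, Matrix.invOf_mul_cancel_right, Matrix.mul_invOf_cancel_right, invOf_mul_cancel_left, mul_invOf_cancel_left, invOf_mul_cancel_right, mul_invOf_cancel_right]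
    abel
  have hRd : IsUnit R.det := (Matrix.isUnit_iff_isUnit_det R).1 hRu
  have hk1R : (P * B + Q * E) * Rᴴ * (R * E * Rᴴ)⁻¹ * R = P * (B * E⁻¹) + Q := by
    rw [hk1, Matrix.nonsing_inv_mul_cancel_right _ _ hRd]
  have hzd : (D *ᵥ w) ∘ Sum.inl -
      ((D * T * Dᴴ).toBlocks₁₂ * ((D * T * Dᴴ).toBlocks₂₂)⁻¹) *ᵥ ((D *ᵥ w) ∘ Sum.inr) =
      P *ᵥ (w ∘ Sum.inl - (B * E⁻¹) *ᵥ (w ∘ Sum.inr)) := by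
    rw [hw1, hw2, hb12, hb22, mulVec_mulVec, hk1R, Matrix.add_mulVec, Matrix.mulVec_sub,
      ← mulVec_mulVec]
    abel
  have hcan1 : Pᴴ * ((P * (A - B * E⁻¹ * C) * Pᴴ)⁻¹ * P) = (A - B * E⁻¹ * C)⁻¹ := by
    rw [Matrix.mul_inv_rev, Matrix.mul_inv_rev]
    simp only [← Matrix.invOf_eq_nonsing_inv, Matrix.mul_assoc, invOf_mul_self, mul_invOf_self,
      Matrix.mul_invOf_cancel_left, Matrix.invOf_mul_cancel_left, mul_invOf_cancel_left,
      invOf_mul_cancel_left, mul_one, Matrix.mul_one]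
  have hcan2 : Rᴴ * ((R * E * Rᴴ)⁻¹ * R) = E⁻¹ := by
    rw [Matrix.mul_inv_rev, Matrix.mul_inv_rev]
    simp only [← Matrix.invOf_eq_nonsing_inv, Matrix.mul_assoc, invOf_mul_self, mul_invOf_self,
      Matrix.mul_invOf_cancel_left, Matrix.invOf_mul_cancel_left, mul_invOf_cancel_left,
      invOf_mul_cancel_left, mul_one, Matrix.mul_one]
  unfold auxF
  refine congrArg₂ Prod.mk ?_ ?_
  · rw [hzd, hk2, mulVec_mulVec, star_mulVec, dotProduct_mulVec, vecMul_vecMul, hcan1,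
      ← dotProduct_mulVec]
  · rw [hw2, hb22, mulVec_mulVec, star_mulVec, dotProduct_mulVec, vecMul_vecMul, hcan2,
      ← dotProduct_mulVec]


/-- The set 𝓖 of block upper-triangular matrices (partition sizes `t`, `r`, `q = N - m`)
with invertible diagonal blocks. -/
def memG (t r q : ℕ) (G : Matrix (Fin t ⊕ Fin r ⊕ Fin q) (Fin t ⊕ Fin r ⊕ Fin q) ℂ) : Prop :=
  (∀ i j, G (Sum.inr i) (Sum.inl j) = 0) ∧
  (∀ i j, G (Sum.inr (Sum.inr i)) (Sum.inr (Sum.inl j)) = 0) ∧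
  IsUnit (G.submatrix Sum.inl Sum.inl) ∧
  IsUnit (G.submatrix (Sum.inr ∘ Sum.inl) (Sum.inr ∘ Sum.inl)) ∧
  IsUnit (G.submatrix (Sum.inr ∘ Sum.inr) (Sum.inr ∘ Sum.inr))

/-- The set 𝓕 of vectors in ℂ^N whose last `N - t` entries are zero. -/
def memF (t r q : ℕ) (f : Fin t ⊕ Fin r ⊕ Fin q → ℂ) : Prop :=
  ∀ i, f (Sum.inr i) = 0

/-- Second block (size `r`) of a partitioned vector. -/
def blk2 {t r q : ℕ} (z : Fin t ⊕ Fin r ⊕ Fin q → ℂ) : Fin r → ℂ :=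
  fun i => z (Sum.inr (Sum.inl i))

/-- Third block (size `q = N - m`) of a partitioned vector. -/
def blk3 {t r q : ℕ} (z : Fin t ⊕ Fin r ⊕ Fin q → ℂ) : Fin q → ℂ :=
  fun i => z (Sum.inr (Sum.inr i))

/-- The `(2,2)` block `S₂₂` of a partitioned matrix. -/
def S22 {t r q : ℕ} (S : Matrix (Fin t ⊕ Fin r ⊕ Fin q) (Fin t ⊕ Fin r ⊕ Fin q) ℂ) :
    Matrix (Fin r) (Fin r) ℂ :=
  S.submatrix (Sum.inr ∘ Sum.inl) (Sum.inr ∘ Sum.inl)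

/-- The `(2,3)` block `S₂₃` of a partitioned matrix. -/
def S23 {t r q : ℕ} (S : Matrix (Fin t ⊕ Fin r ⊕ Fin q) (Fin t ⊕ Fin r ⊕ Fin q) ℂ) :
    Matrix (Fin r) (Fin q) ℂ :=
  S.submatrix (Sum.inr ∘ Sum.inl) (Sum.inr ∘ Sum.inr)

/-- The `(3,2)` block `S₃₂` of a partitioned matrix. -/
def S32 {t r q : ℕ} (S : Matrix (Fin t ⊕ Fin r ⊕ Fin q) (Fin t ⊕ Fin r ⊕ Fin q) ℂ) :
    Matrix (Fin q) (Fin r) ℂ :=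
  S.submatrix (Sum.inr ∘ Sum.inr) (Sum.inr ∘ Sum.inl)

/-- The `(3,3)` block `S₃₃` of a partitioned matrix. -/
def S33 {t r q : ℕ} (S : Matrix (Fin t ⊕ Fin r ⊕ Fin q) (Fin t ⊕ Fin r ⊕ Fin q) ℂ) :
    Matrix (Fin q) (Fin q) ℂ :=
  S.submatrix (Sum.inr ∘ Sum.inr) (Sum.inr ∘ Sum.inr)

/-- `z_{2.3} = z₂ - S₂₃ S₃₃⁻¹ z₃`. -/
noncomputable def zdot {t r q : ℕ} (z : Fin t ⊕ Fin r ⊕ Fin q → ℂ)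
    (S : Matrix (Fin t ⊕ Fin r ⊕ Fin q) (Fin t ⊕ Fin r ⊕ Fin q) ℂ) : Fin r → ℂ :=
  blk2 z - (S23 S * (S33 S)⁻¹) *ᵥ blk3 z

/-- `S_{2.3} = S₂₂ - S₂₃ S₃₃⁻¹ S₃₂`. -/
noncomputable def Sdot {t r q : ℕ}
    (S : Matrix (Fin t ⊕ Fin r ⊕ Fin q) (Fin t ⊕ Fin r ⊕ Fin q) ℂ) :
    Matrix (Fin r) (Fin r) ℂ :=
  S22 S - S23 S * (S33 S)⁻¹ * S32 S

/-- The maximal invariant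
`t₁(z,S) = (z_{2.3}† S_{2.3}⁻¹ z_{2.3}, z₃† S₃₃⁻¹ z₃)` for the case `m < N`. -/
noncomputable def t1 {t r q : ℕ} (z : Fin t ⊕ Fin r ⊕ Fin q → ℂ)
    (S : Matrix (Fin t ⊕ Fin r ⊕ Fin q) (Fin t ⊕ Fin r ⊕ Fin q) ℂ) : ℂ × ℂ :=
  (star (zdot z S) ⬝ᵥ ((Sdot S)⁻¹ *ᵥ zdot z S),
   star (blk3 z) ⬝ᵥ ((S33 S)⁻¹ *ᵥ blk3 z))

/-- Proposition 1 (invariance, case `m < N`): for every `(G,f) ∈ 𝓛`, every `z` and every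
Hermitian positive definite `S`, `t₁(Gz + f, G S Gᴴ) = t₁(z, S)`. -/
theorem stmt2 (t r q : ℕ) (ht : 1 ≤ t) (hr : 1 ≤ r) (hq : 1 ≤ q)
    (G : Matrix (Fin t ⊕ Fin r ⊕ Fin q) (Fin t ⊕ Fin r ⊕ Fin q) ℂ)
    (f : Fin t ⊕ Fin r ⊕ Fin q → ℂ)
    (hG : memG t r q G) (hf : memF t r q f)
    (z : Fin t ⊕ Fin r ⊕ Fin q → ℂ)
    (S : Matrix (Fin t ⊕ Fin r ⊕ Fin q) (Fin t ⊕ Fin r ⊕ Fin q) ℂ)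
    (hS : S.PosDef) :
    t1 (G *ᵥ z + f) (G * S * Gᴴ) = t1 z S := by
  obtain ⟨h21, h32, hu1, hu2, hu3⟩ := hG
  have hT : (S.toBlocks₂₂ : Matrix (Fin r ⊕ Fin q) (Fin r ⊕ Fin q) ℂ).PosDef :=
    posDef_toBlocks₂₂ hS
  have hE : ((S.toBlocks₂₂).toBlocks₂₂ : Matrix (Fin q) (Fin q) ℂ).PosDef :=
    posDef_toBlocks₂₂ hT
  have hD21 : (G.toBlocks₂₂).toBlocks₂₁ = 0 := by ext i j; exact h32 i j
  have hG21 : G.toBlocks₂₁ = 0 := by ext i j; exact h21 i j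
  have hGdec : G = fromBlocks G.toBlocks₁₁ G.toBlocks₁₂ 0 G.toBlocks₂₂ := by
    rw [← hG21]; exact (fromBlocks_toBlocks G).symm
  have hM : (G * S * Gᴴ).toBlocks₂₂ = G.toBlocks₂₂ * S.toBlocks₂₂ * (G.toBlocks₂₂)ᴴ := by
    conv_lhs => rw [hGdec, ← fromBlocks_toBlocks S]
    rw [fromBlocks_conjTranspose, fromBlocks_multiply, fromBlocks_multiply,
      toBlocks_fromBlocks₂₂]
    simp [Matrix.zero_mul, Matrix.mul_zero]
  have hf' : ∀ i, f (Sum.inr i) = 0 := hf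
  have hv : (G *ᵥ z + f) ∘ Sum.inr = G.toBlocks₂₂ *ᵥ (z ∘ Sum.inr) := by
    funext i
    simp [Matrix.mulVec, dotProduct, Fintype.sum_sum_type, h21, hf', Matrix.toBlocks₂₂,
      Function.comp]
  have e1 : t1 (G *ᵥ z + f) (G * S * Gᴴ) =
      auxF ((G *ᵥ z + f) ∘ Sum.inr) ((G * S * Gᴴ).toBlocks₂₂) := rfl
  have e2 : t1 z S = auxF (z ∘ Sum.inr) (S.toBlocks₂₂) := rfl
  rw [e1, e2, hv, hM]
  exact key2 _ _ _ hD21 hu2 hu3 hE
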